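/- Let p < q be reals, set t₀ = (p + q)/2 and z₀ = (q − p)/2, and for s ∈ ℝ define φ_s(t) = (q − t) e^{πs} + (t − p) e^{−πs} and m_s(t) = ((q − t) p e^{πs} + (t − p) q e^{−πs})/φ_s(t) whenever φ_s(t) ≠ 0. Let t₊ ≠ t₋ be reals. Then for every s ∈ ℝ such that φ_{−s}(t₊) ≠ 0, φ_{−s}(t₋) ≠ 0 and m_{−s}(t₊) ≠ m_{−s}(t₋), setting T(s) = (m_{−s}(t₊) + m_{−s}(t₋))/2 and Z(s) = (m_{−s}(t₊) − m_{−s}(t₋))/2, the quantity (Z(s)² + z₀² − (T(s) − t₀)²)/(2 Z(s) z₀) equals its value at s = 0, namely (Z(0)² + z₀² − (T(0) − t₀)²)/(2 Z(0) z₀). -/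

import Mathlib

/-- Conformal factor numerator of the modular flow of the interval `(p, q)`:
`φ_s(t) = (q - t) e^{πs} + (t - p) e^{-πs}`. -/
noncomputable def phiFlow (p q s t : ℝ) : ℝ :=
  (q - t) * Real.exp (Real.pi * s) + (t - p) * Real.exp (-(Real.pi * s))

/-- Point transformation implemented by the modular flow of the interval `(p, q)`. -/
noncomputable def mFlow (p q s t : ℝ) : ℝ :=
  ((q - t) * p * Real.exp (Real.pi * s) + (t - p) * q * Real.exp (-(Real.pi * s))) /
    phiFlow p q s t

/-- Poincaré time of the bulk point with null coordinates `m_{-s}(t₊)`, `m_{-s}(t₋)`. -/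
noncomputable def Tmid (p q tp tm s : ℝ) : ℝ :=
  (mFlow p q (-s) tp + mFlow p q (-s) tm) / 2

/-- Poincaré radial coordinate of the bulk point with null coordinates `m_{-s}(t₊)`, `m_{-s}(t₋)`. -/
noncomputable def Zhalf (p q tp tm s : ℝ) : ℝ :=
  (mFlow p q (-s) tp - mFlow p q (-s) tm) / 2

lemma mFlow_sub_p (p q s t : ℝ) (h : phiFlow p q s t ≠ 0) :
    mFlow p q s t - p = (t - p) * (q - p) * Real.exp (-(Real.pi * s)) / phiFlow p q s t := by
  rw [mFlow, div_sub' h]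
  congr 1
  rw [phiFlow]; ring

lemma q_sub_mFlow (p q s t : ℝ) (h : phiFlow p q s t ≠ 0) :
    q - mFlow p q s t = (q - t) * (q - p) * Real.exp (Real.pi * s) / phiFlow p q s t := by
  rw [mFlow, sub_div' h]
  congr 1
  rw [phiFlow]; ring

lemma prod1 (p q s t t' : ℝ) (h : phiFlow p q s t ≠ 0) (h' : phiFlow p q s t' ≠ 0) :
    (mFlow p q s t - p) * (q - mFlow p q s t') =
      (t - p) * (q - t') * (q - p) ^ 2 / (phiFlow p q s t * phiFlow p q s t') := by
  rw [mFlow_sub_p _ _ _ _ h, q_sub_mFlow _ _ _ _ h']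
  have hE : Real.exp (-(Real.pi * s)) * Real.exp (Real.pi * s) = 1 := by
    rw [← Real.exp_add]; simp
  field_simp
  linear_combination ((t - p) * (q - t') * (q - p) ^ 2) * hE

lemma key (p q A B : ℝ) (hqp : q - p ≠ 0) (hAB : A - B ≠ 0) :
    (((A - B) / 2) ^ 2 + ((q - p) / 2) ^ 2 - ((A + B) / 2 - (p + q) / 2) ^ 2) /
        (2 * ((A - B) / 2) * ((q - p) / 2)) =
      ((A - p) * (q - B) + (q - A) * (B - p)) / ((A - p) * (q - B) - (q - A) * (B - p)) := by
  have hd : (A - p) * (q - B) - (q - A) * (B - p) = (A - B) * (q - p) := by ring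
  rw [hd]
  have hden : 2 * ((A - B) / 2) * ((q - p) / 2) ≠ 0 :=
    mul_ne_zero (mul_ne_zero two_ne_zero (div_ne_zero hAB two_ne_zero))
      (div_ne_zero hqp two_ne_zero)
  rw [div_eq_div_iff hden (mul_ne_zero hAB hqp)]
  ring

lemma mFlow_zero (p q t : ℝ) (h : q - p ≠ 0) : mFlow p q 0 t = t := by
  have : phiFlow p q 0 t = q - p := by simp [phiFlow]
  rw [mFlow, this]
  simp only [mul_zero, neg_zero, Real.exp_zero, mul_one]
  rw [div_eq_iff h]; ring

/-- The bulk modular flow moves a bulk point along a trajectory of constant AdS₂-invariant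
distance from the bulk point `(t₀, z₀) = ((p+q)/2, (q-p)/2)` (Section 5.2): the quantity
`(Z(s)² + z₀² - (T(s) - t₀)²)/(2 Z(s) z₀)` is independent of `s`. -/
theorem bulk_modular_flow_constant_invariant_distance
    (p q : ℝ) (hpq : p < q) (tp tm : ℝ) (htpm : tp ≠ tm) (s : ℝ)
    (h1 : phiFlow p q (-s) tp ≠ 0) (h2 : phiFlow p q (-s) tm ≠ 0)
    (h3 : mFlow p q (-s) tp ≠ mFlow p q (-s) tm) :
    (Zhalf p q tp tm s ^ 2 + ((q - p) / 2) ^ 2 - (Tmid p q tp tm s - (p + q) / 2) ^ 2) /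
        (2 * Zhalf p q tp tm s * ((q - p) / 2)) =
      (Zhalf p q tp tm 0 ^ 2 + ((q - p) / 2) ^ 2 - (Tmid p q tp tm 0 - (p + q) / 2) ^ 2) /
        (2 * Zhalf p q tp tm 0 * ((q - p) / 2)) := by
  have hqp : q - p ≠ 0 := sub_ne_zero.mpr hpq.ne'
  have htt : tp - tm ≠ 0 := sub_ne_zero.mpr htpm
  set A := mFlow p q (-s) tp with hA
  set B := mFlow p q (-s) tm with hB
  have hAB : A - B ≠ 0 := sub_ne_zero.mpr h3
  have hz0 : mFlow p q (-0) tp = tp := by rw [neg_zero, mFlow_zero p q tp hqp]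
  have hz0' : mFlow p q (-0) tm = tm := by rw [neg_zero, mFlow_zero p q tm hqp]
  have hL : Zhalf p q tp tm s = (A - B) / 2 := rfl
  have hT : Tmid p q tp tm s = (A + B) / 2 := rfl
  have hL0 : Zhalf p q tp tm 0 = (tp - tm) / 2 := by rw [Zhalf, hz0, hz0']
  have hT0 : Tmid p q tp tm 0 = (tp + tm) / 2 := by rw [Tmid, hz0, hz0']
  rw [hL, hT, hL0, hT0, key p q A B hqp hAB, key p q tp tm hqp htt]
  -- products are s-independent
  have hP1 : (A - p) * (q - B) = (tp - p) * (q - tm) * ((q - p) ^ 2 /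
      (phiFlow p q (-s) tp * phiFlow p q (-s) tm)) := by
    rw [hA, hB, prod1 p q (-s) tp tm h1 h2]; ring
  have hP2 : (q - A) * (B - p) = (q - tp) * (tm - p) * ((q - p) ^ 2 /
      (phiFlow p q (-s) tp * phiFlow p q (-s) tm)) := by
    rw [hA, hB, mul_comm, prod1 p q (-s) tm tp h2 h1]; ring
  set c := (q - p) ^ 2 / (phiFlow p q (-s) tp * phiFlow p q (-s) tm) with hc
  have hc0 : c ≠ 0 := div_ne_zero (pow_ne_zero _ hqp) (mul_ne_zero h1 h2)
  rw [hP1, hP2,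
    show (tp - p) * (q - tm) * c + (q - tp) * (tm - p) * c =
      c * ((tp - p) * (q - tm) + (q - tp) * (tm - p)) by ring,
    show (tp - p) * (q - tm) * c - (q - tp) * (tm - p) * c =
      c * ((tp - p) * (q - tm) - (q - tp) * (tm - p)) by ring,
    mul_div_mul_left _ _ hc0]
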